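/- Let H be a vector-valued RKHS on Δ^m with matrix-valued kernel k. Then for all s, t ∈ Δ^m and 1 ≤ p, q ≤ ∞, ‖k(s,t)‖_{p;q} ≤ ‖k(s,s)‖_{q';q}^{1/2} · ‖k(t,t)‖_{p;p'}^{1/2}, where p' and q' are the Hölder conjugates of p and q. -/

import Mathlib

open MeasureTheory
open scoped ENNReal

/-- The `ℓ^p` norm on `ℝ^m`, including `p = ∞`. -/
noncomputable def lpnorm {m : ℕ} (p : ℝ≥0∞) (x : Fin m → ℝ) : ℝ :=
  ‖(WithLp.equiv p (Fin m → ℝ)).symm x‖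

/-- The operator norm of a matrix `A : ℝ^m → ℝ^m` from `ℓ^p` to `ℓ^q`,
`‖A‖_{p;q} = sup_{x ≠ 0} ‖Ax‖_q / ‖x‖_p`. -/
noncomputable def matOpNorm {m : ℕ} (p q : ℝ≥0∞) (A : Matrix (Fin m) (Fin m) ℝ) : ℝ :=
  sSup {c : ℝ | ∃ x : Fin m → ℝ, x ≠ 0 ∧ c = lpnorm q (A.mulVec x) / lpnorm p x}



lemma lpnorm_nonneg {m : ℕ} {r : ℝ≥0∞} (hr : 1 ≤ r) (x : Fin m → ℝ) : 0 ≤ lpnorm r x := by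
  haveI : Fact (1 ≤ r) := ⟨hr⟩; exact norm_nonneg _

lemma lpnorm_zero {m : ℕ} {r : ℝ≥0∞} (hr : 1 ≤ r) : lpnorm r (0 : Fin m → ℝ) = 0 := by
  haveI : Fact (1 ≤ r) := ⟨hr⟩; simp [lpnorm]

lemma lpnorm_pos {m : ℕ} {r : ℝ≥0∞} (hr : 1 ≤ r) {x : Fin m → ℝ} (hx : x ≠ 0) :
    0 < lpnorm r x := by
  haveI : Fact (1 ≤ r) := ⟨hr⟩
  rw [lpnorm, norm_pos_iff]
  exact fun h => hx (by simpa using congrArg (WithLp.equiv r (Fin m → ℝ)) h)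

lemma lpnorm_top {m : ℕ} (x : Fin m → ℝ) : lpnorm ⊤ x = ⨆ i, |x i| := by
  rw [lpnorm, PiLp.norm_eq_ciSup]
  simp [Real.norm_eq_abs]

lemma lpnorm_eq_sum {m : ℕ} {r : ℝ≥0∞} (hr : 1 ≤ r) (hr' : r ≠ ∞) (x : Fin m → ℝ) :
    lpnorm r x = (∑ i, |x i| ^ r.toReal) ^ (1 / r.toReal) := by
  haveI : Fact (1 ≤ r) := ⟨hr⟩
  rw [lpnorm, PiLp.norm_eq_sum]
  · simp [Real.norm_eq_abs]
  · exact ENNReal.toReal_pos (one_pos.trans_le hr).ne' hr'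

lemma lpnorm_one {m : ℕ} (x : Fin m → ℝ) : lpnorm 1 x = ∑ i, |x i| := by
  rw [lpnorm_eq_sum le_rfl ENNReal.one_ne_top]
  simp

lemma conj_trichotomy {a b : ℝ≥0∞} (ha : 1 ≤ a) (hab : 1/a + 1/b = 1) :
    (a = 1 ∧ b = ∞) ∨ (a = ∞ ∧ b = 1) ∨
      (a ≠ ∞ ∧ b ≠ ∞ ∧ a.toReal.HolderConjugate b.toReal) := by
  have h : a⁻¹ + b⁻¹ = 1 := by simpa [one_div] using hab
  rcases eq_or_lt_of_le ha with h1 | h1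
  · left
    refine ⟨h1.symm, ?_⟩
    rw [← h1] at h
    simp only [inv_one] at h
    have hb : b⁻¹ = 0 := by
      have h2 := ENNReal.add_right_inj (a := (1:ℝ≥0∞)) ENNReal.one_ne_top (b := b⁻¹) (c := 0)
      rw [add_zero] at h2
      exact h2.mp h
    simpa [ENNReal.inv_eq_zero] using hb
  rcases eq_or_ne a ∞ with rfl | hatop
  · right; left
    refine ⟨rfl, ?_⟩
    simp only [ENNReal.inv_top, zero_add] at h
    simpa [ENNReal.inv_eq_one] using h
  · right; right
    have hbtop : b ≠ ∞ := by
      rintro rfl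
      simp only [ENNReal.inv_top, add_zero, ENNReal.inv_eq_one] at h
      exact h1.ne' h
    have ha0 : a ≠ 0 := (one_pos.trans_le ha).ne'
    have hb0 : b ≠ 0 := by
      rintro rfl
      simp at h
    refine ⟨hatop, hbtop, Real.holderConjugate_iff.mpr ⟨?_, ?_⟩⟩
    · have := (ENNReal.toReal_lt_toReal ENNReal.one_ne_top hatop).mpr h1
      simpa using this
    · have h2 : (a⁻¹ + b⁻¹).toReal = 1 := by rw [h]; simp
      rw [ENNReal.toReal_add (by simp [ha0]) (by simp [hb0]),
        ENNReal.toReal_inv, ENNReal.toReal_inv] at h2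
      simpa [one_div] using h2

lemma abs_pairing_le_one_top {m : ℕ} (y w : Fin m → ℝ) :
    ∑ i, y i * w i ≤ (⨆ i, |y i|) * ∑ i, |w i| := by
  calc ∑ i, y i * w i ≤ ∑ i, |y i| * |w i| := by
        refine Finset.sum_le_sum fun i _ => ?_
        rw [← abs_mul]; exact le_abs_self _
    _ ≤ ∑ i, (⨆ j, |y j|) * |w i| := by
        refine Finset.sum_le_sum fun i _ => ?_
        exact mul_le_mul_of_nonneg_right (le_ciSup (f := fun j => |y j|) (Set.Finite.bddAbove (Set.finite_range _)) i)
          (abs_nonneg _)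
    _ = (⨆ i, |y i|) * ∑ i, |w i| := by rw [Finset.mul_sum]

lemma pairing_le {m : ℕ} {a b : ℝ≥0∞} (ha : 1 ≤ a) (hb : 1 ≤ b) (hab : 1/a + 1/b = 1)
    (y w : Fin m → ℝ) : ∑ i, y i * w i ≤ lpnorm b y * lpnorm a w := by
  rcases conj_trichotomy ha hab with ⟨rfl, rfl⟩ | ⟨rfl, rfl⟩ | ⟨hatop, hbtop, hconj⟩
  · rw [lpnorm_top, lpnorm_one]
    exact abs_pairing_le_one_top y w
  · rw [lpnorm_top, lpnorm_one]
    calc ∑ i, y i * w i = ∑ i, w i * y i := by simp [mul_comm]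
      _ ≤ (⨆ i, |w i|) * ∑ i, |y i| := abs_pairing_le_one_top w y
      _ = (∑ i, |y i|) * ⨆ i, |w i| := mul_comm _ _
  · rw [lpnorm_eq_sum hb hbtop, lpnorm_eq_sum ha hatop]
    exact Real.inner_le_Lp_mul_Lq Finset.univ y w hconj.symm

lemma exists_dual_vec {m : ℕ} {a b : ℝ≥0∞} (ha : 1 ≤ a) (hb : 1 ≤ b) (hab : 1/a + 1/b = 1)
    (v : Fin m → ℝ) : ∃ y : Fin m → ℝ, ∑ i, y i * v i = lpnorm a v ∧ lpnorm b y ≤ 1 := by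
  by_cases hv : v = 0
  · exact ⟨0, by simp [hv, lpnorm_zero ha], by simp [lpnorm_zero hb, zero_le_one]⟩
  obtain ⟨i₁, hi₁⟩ : ∃ i, v i ≠ 0 := Function.ne_iff.mp hv
  haveI : Nonempty (Fin m) := ⟨i₁⟩
  rcases conj_trichotomy ha hab with ⟨rfl, rfl⟩ | ⟨rfl, rfl⟩ | ⟨hatop, hbtop, hconj⟩
  · -- a = 1, b = ∞
    refine ⟨fun i => if v i = 0 then 0 else |v i| / v i, ?_, ?_⟩
    · rw [lpnorm_one]
      refine Finset.sum_congr rfl fun i _ => ?_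
      by_cases h : v i = 0
      · simp [h]
      · simp [h, div_mul_cancel₀ _ h]
    · rw [lpnorm_top]
      refine Real.iSup_le (fun i => ?_) zero_le_one
      by_cases h : v i = 0
      · simp [h]
      · simp [h, abs_div, abs_abs, div_self (abs_ne_zero.mpr h)]
  · -- a = ∞, b = 1
    obtain ⟨i₀, hi₀⟩ := Finite.exists_max fun i => |v i|
    have hvi₀ : v i₀ ≠ 0 := by
      intro h
      have := hi₀ i₁
      simp only [h, abs_zero] at this
      exact hi₁ (abs_eq_zero.mp (le_antisymm this (abs_nonneg _)))
    refine ⟨fun j => if j = i₀ then |v i₀| / v i₀ else 0, ?_, ?_⟩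
    · have : ∀ j, (if j = i₀ then |v i₀| / v i₀ else 0) * v j
          = if j = i₀ then |v i₀| else 0 := by
        intro j
        by_cases h : j = i₀
        · subst h; simp [div_mul_cancel₀ _ hvi₀]
        · simp [h]
      rw [Finset.sum_congr rfl fun j _ => this j, Finset.sum_ite_eq' _ i₀, lpnorm_top]
      simp only [Finset.mem_univ, if_true]
      exact (le_antisymm (le_ciSup (Set.Finite.bddAbove (Set.finite_range _)) i₀)
        (Real.iSup_le (fun i => hi₀ i) (abs_nonneg _))).symm ▸ rfl
    · rw [lpnorm_one]
      have : ∀ j, |if j = i₀ then |v i₀| / v i₀ else 0| = if j = i₀ then 1 else 0 := by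
        intro j
        by_cases h : j = i₀ <;> simp [h, abs_div, abs_abs, div_self (abs_ne_zero.mpr hvi₀)]
      rw [Finset.sum_congr rfl fun j _ => this j, Finset.sum_ite_eq' _ i₀]
      simp
  · -- both finite
    set α := a.toReal with hα
    set β := b.toReal with hβ
    have hα1 : 1 < α := hconj.lt
    have hαpos : 0 < α := hconj.pos
    have hβpos : 0 < β := hconj.symm.pos
    set N := lpnorm a v with hNdef
    have hN : 0 < N := lpnorm_pos ha hv
    have hNα : 0 < N ^ (α - 1) := Real.rpow_pos_of_pos hN _
    have sumv : ∑ i, |v i| ^ α = N ^ α := by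
      rw [hNdef, lpnorm_eq_sum ha hatop, one_div, Real.rpow_inv_rpow
        (Finset.sum_nonneg fun i _ => Real.rpow_nonneg (abs_nonneg _) _) hαpos.ne']
    set sgn : Fin m → ℝ := fun i => if v i = 0 then 0 else |v i| / v i with hsgn
    refine ⟨fun i => sgn i * |v i| ^ (α - 1) / N ^ (α - 1), ?_, ?_⟩
    · have hterm : ∀ i, sgn i * |v i| ^ (α - 1) / N ^ (α - 1) * v i
          = |v i| ^ α / N ^ (α - 1) := by
        intro i
        by_cases h : v i = 0
        · simp [hsgn, h, Real.zero_rpow hαpos.ne']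
        · have habs : (0:ℝ) < |v i| := abs_pos.mpr h
          have : sgn i * v i = |v i| := by
            simp [hsgn, h, div_mul_cancel₀ _ h]
          calc sgn i * |v i| ^ (α - 1) / N ^ (α - 1) * v i
              = sgn i * v i * |v i| ^ (α - 1) / N ^ (α - 1) := by ring
            _ = |v i| ^ (1:ℝ) * |v i| ^ (α - 1) / N ^ (α - 1) := by rw [this, Real.rpow_one]
            _ = |v i| ^ α / N ^ (α - 1) := by
                rw [← Real.rpow_add habs]; ring_nf
      rw [Finset.sum_congr rfl fun i _ => hterm i, ← Finset.sum_div, sumv,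
        ← Real.rpow_sub hN]
      norm_num
    · have habsy : ∀ i, |sgn i * |v i| ^ (α - 1) / N ^ (α - 1)|
          = |v i| ^ (α - 1) / N ^ (α - 1) := by
        intro i
        by_cases h : v i = 0
        · simp [hsgn, h, Real.zero_rpow (by linarith : α - 1 ≠ 0)]
        · rw [abs_div, abs_mul, abs_of_pos hNα,
            abs_of_nonneg (Real.rpow_nonneg (abs_nonneg _) _)]
          simp [hsgn, h, abs_div, abs_abs, div_self (abs_ne_zero.mpr h)]
      rw [lpnorm_eq_sum hb hbtop]
      have hsum : ∑ i, |sgn i * |v i| ^ (α - 1) / N ^ (α - 1)| ^ β = 1 := by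
        have : ∀ i, |sgn i * |v i| ^ (α - 1) / N ^ (α - 1)| ^ β = |v i| ^ α / N ^ α := by
          intro i
          rw [habsy i, Real.div_rpow (Real.rpow_nonneg (abs_nonneg _) _) hNα.le,
            ← Real.rpow_mul (abs_nonneg _), ← Real.rpow_mul hN.le,
            hconj.sub_one_mul_conj]
        rw [Finset.sum_congr rfl fun i _ => this i, ← Finset.sum_div, sumv,
          div_self (Real.rpow_pos_of_pos hN α).ne']
      rw [hsum, Real.one_rpow]


lemma matOpNorm_nonneg {m : ℕ} {a b : ℝ≥0∞} (ha : 1 ≤ a) (hb : 1 ≤ b)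
    (A : Matrix (Fin m) (Fin m) ℝ) : 0 ≤ matOpNorm a b A := by
  refine Real.sSup_nonneg ?_
  rintro c ⟨x, hx, rfl⟩
  exact div_nonneg (lpnorm_nonneg hb _) (lpnorm_nonneg ha _)

lemma matOpNorm_bddAbove {m : ℕ} {a b : ℝ≥0∞} (ha : 1 ≤ a) (hb : 1 ≤ b)
    (A : Matrix (Fin m) (Fin m) ℝ) :
    BddAbove {c : ℝ | ∃ x : Fin m → ℝ, x ≠ 0 ∧ c = lpnorm b (A.mulVec x) / lpnorm a x} := by
  haveI : Fact (1 ≤ a) := ⟨ha⟩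
  haveI : Fact (1 ≤ b) := ⟨hb⟩
  set L : PiLp a (fun _ : Fin m => ℝ) →ₗ[ℝ] PiLp b (fun _ : Fin m => ℝ) :=
    (WithLp.linearEquiv b ℝ (Fin m → ℝ)).symm.toLinearMap ∘ₗ A.mulVecLin ∘ₗ
      (WithLp.linearEquiv a ℝ (Fin m → ℝ)).toLinearMap with hL
  set T := LinearMap.toContinuousLinearMap L with hT
  refine ⟨‖T‖, ?_⟩
  rintro c ⟨x, hx, rfl⟩
  rw [div_le_iff₀ (lpnorm_pos ha hx)]
  exact T.le_opNorm ((WithLp.equiv a (Fin m → ℝ)).symm x)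

lemma lpnorm_mulVec_le {m : ℕ} {a b : ℝ≥0∞} (ha : 1 ≤ a) (hb : 1 ≤ b)
    (A : Matrix (Fin m) (Fin m) ℝ) (x : Fin m → ℝ) :
    lpnorm b (A.mulVec x) ≤ matOpNorm a b A * lpnorm a x := by
  by_cases hx : x = 0
  · simp [hx, Matrix.mulVec_zero, lpnorm_zero ha, lpnorm_zero hb]
  have hmem : lpnorm b (A.mulVec x) / lpnorm a x ∈
      {c : ℝ | ∃ x : Fin m → ℝ, x ≠ 0 ∧ c = lpnorm b (A.mulVec x) / lpnorm a x} :=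
    ⟨x, hx, rfl⟩
  have := le_csSup (matOpNorm_bddAbove ha hb A) hmem
  rw [div_le_iff₀ (lpnorm_pos ha hx)] at this
  exact this

/-- For a vector-valued RKHS `H` on `Δ^m` with matrix-valued kernel `k`,
for all `s, t ∈ Δ^m` and `1 ≤ p, q ≤ ∞`,
`‖k(s,t)‖_{p;q} ≤ ‖k(s,s)‖_{q';q}^{1/2} · ‖k(t,t)‖_{p;p'}^{1/2}`,
where `p'`, `q'` are the Hölder conjugates of `p`, `q`. -/
theorem rkhs_kernel_offdiag_bound {m : ℕ} {H : Type*}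
    [NormedAddCommGroup H] [InnerProductSpace ℝ H] [CompleteSpace H]
    (ev : H →ₗ[ℝ] (stdSimplex ℝ (Fin m) → Fin m → ℝ))
    (hinj : Function.Injective ev)
    (k : stdSimplex ℝ (Fin m) → stdSimplex ℝ (Fin m) → Matrix (Fin m) (Fin m) ℝ)
    (K : stdSimplex ℝ (Fin m) → (Fin m → ℝ) →ₗ[ℝ] H)
    (hK : ∀ t u s, ev (K t u) s = (k s t).mulVec u)
    (hrep : ∀ (t : stdSimplex ℝ (Fin m)) (u : Fin m → ℝ) (f : H),
      ∑ i, u i * ev f t i = (inner ℝ (K t u) f : ℝ))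
    (p p' q q' : ℝ≥0∞) (hp : 1 ≤ p) (hp' : 1 ≤ p') (hq : 1 ≤ q) (hq' : 1 ≤ q')
    (hpconj : 1 / p + 1 / p' = 1) (hqconj : 1 / q + 1 / q' = 1)
    (s t : stdSimplex ℝ (Fin m)) :
    matOpNorm p q (k s t)
      ≤ Real.sqrt (matOpNorm q' q (k s s)) * Real.sqrt (matOpNorm p p' (k t t)) := by
  set M₁ := matOpNorm q' q (k s s) with hM₁def
  set M₂ := matOpNorm p p' (k t t) with hM₂def
  have hM₁ : 0 ≤ M₁ := matOpNorm_nonneg hq' hq _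
  have hM₂ : 0 ≤ M₂ := matOpNorm_nonneg hp hp' _
  refine Real.sSup_le ?_ (mul_nonneg (Real.sqrt_nonneg _) (Real.sqrt_nonneg _))
  rintro c ⟨x, hx, rfl⟩
  rw [div_le_iff₀ (lpnorm_pos hp hx)]
  set v := (k s t).mulVec x with hv
  obtain ⟨y, hy1, hy2⟩ := exists_dual_vec hq hq' hqconj v
  have hyn : 0 ≤ lpnorm q' y := lpnorm_nonneg hq' y
  have hxn : 0 ≤ lpnorm p x := lpnorm_nonneg hp x
  -- Step 1: `‖v‖_q = ⟪K s y, K t x⟫`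
  have e1 : lpnorm q v = (inner ℝ (K s y) (K t x) : ℝ) := by
    rw [← hrep s y (K t x), hK t x s, ← hv, hy1]
  -- Step 2: `‖K s y‖² ≤ M₁`
  have b1 : ‖K s y‖ * ‖K s y‖ ≤ M₁ := by
    have c1 : ‖K s y‖ * ‖K s y‖ = ∑ i, y i * ((k s s).mulVec y) i := by
      rw [← real_inner_self_eq_norm_mul_norm, ← hrep s y (K s y), hK s y s]
    have c2 : ∑ i, y i * ((k s s).mulVec y) i
        ≤ lpnorm q' y * lpnorm q ((k s s).mulVec y) :=
      pairing_le hq hq' hqconj y _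
    have c3 : lpnorm q ((k s s).mulVec y) ≤ M₁ * lpnorm q' y :=
      lpnorm_mulVec_le hq' hq _ y
    nlinarith [mul_le_mul_of_nonneg_left c3 hyn, mul_le_mul hy2 hy2 hyn zero_le_one, hM₁]
  -- Step 3: `‖K t x‖² ≤ M₂ * ‖x‖_p²`
  have b2 : ‖K t x‖ * ‖K t x‖ ≤ M₂ * (lpnorm p x * lpnorm p x) := by
    have c1 : ‖K t x‖ * ‖K t x‖ = ∑ i, x i * ((k t t).mulVec x) i := by
      rw [← real_inner_self_eq_norm_mul_norm, ← hrep t x (K t x), hK t x t]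
    have hpconj' : 1 / p' + 1 / p = 1 := by rw [add_comm]; exact hpconj
    have c2 : ∑ i, x i * ((k t t).mulVec x) i
        ≤ lpnorm p x * lpnorm p' ((k t t).mulVec x) :=
      pairing_le hp' hp hpconj' x _
    have c3 : lpnorm p' ((k t t).mulVec x) ≤ M₂ * lpnorm p x :=
      lpnorm_mulVec_le hp hp' _ x
    nlinarith [mul_le_mul_of_nonneg_left c3 hxn]
  have s1 : ‖K s y‖ ≤ Real.sqrt M₁ := by
    rw [← Real.sqrt_mul_self (norm_nonneg (K s y))]
    exact Real.sqrt_le_sqrt b1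
  have s2 : ‖K t x‖ ≤ Real.sqrt M₂ * lpnorm p x := by
    rw [← Real.sqrt_mul_self (norm_nonneg (K t x))]
    calc Real.sqrt (‖K t x‖ * ‖K t x‖) ≤ Real.sqrt (M₂ * (lpnorm p x * lpnorm p x)) :=
          Real.sqrt_le_sqrt b2
      _ = Real.sqrt M₂ * lpnorm p x := by
          rw [Real.sqrt_mul hM₂, Real.sqrt_mul_self hxn]
  calc lpnorm q v = (inner ℝ (K s y) (K t x) : ℝ) := e1
    _ ≤ ‖K s y‖ * ‖K t x‖ := real_inner_le_norm _ _
    _ ≤ Real.sqrt M₁ * (Real.sqrt M₂ * lpnorm p x) :=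
        mul_le_mul s1 s2 (norm_nonneg _) (Real.sqrt_nonneg _)
    _ = Real.sqrt M₁ * Real.sqrt M₂ * lpnorm p x := by ring
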